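/- arXiv:1004.1132 — 6 statements merged into one kernel-verified Lean document; each statement's English description precedes it below -/
import Mathlib

section
/- Let φ : ℝ → 𝔤 be continuous and let F be a fundamental solution of the Euler system associated to φ. Then each F(t) preserves the Lie bracket: [F(t)x, F(t)y] = F(t)[x,y] for all t ∈ ℝ and all x, y ∈ 𝔤. -/
/-- Let `φ : ℝ → L` be continuous and let `F` be a fundamental
solution of the Euler system associated to `φ` (i.e. `F′(t) = −ad(φ(t)) ∘ F(t)`
and `F(0) = id`) on a finite-dimensional real Lie algebra `L`.  Then each
`F(t)` preserves the Lie bracket: `[F(t)x, F(t)y] = F(t)[x, y]` for all `t ∈ ℝ`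
and all `x, y ∈ L`. -/
theorem fundamental_solution_preserves_bracket
    {L : Type*} [NormedAddCommGroup L] [NormedSpace ℝ L] [FiniteDimensional ℝ L]
    (bracket : L →L[ℝ] L →L[ℝ] L)
    (halt : ∀ x : L, bracket x x = 0)
    (hjac : ∀ x y z : L,
      bracket x (bracket y z) + bracket y (bracket z x) + bracket z (bracket x y) = 0)
    (φ : ℝ → L) (hφ : Continuous φ)
    (F : ℝ → L →L[ℝ] L)
    (hF : ∀ t : ℝ, HasDerivAt F (-((bracket (φ t)).comp (F t))) t)
    (hF0 : F 0 = ContinuousLinearMap.id ℝ L) :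
    ∀ (t : ℝ) (x y : L), bracket (F t x) (F t y) = F t (bracket x y) := by
  -- antisymmetry
  have hskew : ∀ a b : L, bracket a b = -bracket b a := by
    intro a b
    have h := halt (a + b)
    simp only [map_add, ContinuousLinearMap.add_apply, halt a, halt b] at h
    refine eq_neg_of_add_eq_zero_left ?_
    rw [← h]; abel
  -- Leibniz form of Jacobi
  have key : ∀ p a b : L, bracket p (bracket a b)
      = bracket (bracket p a) b + bracket a (bracket p b) := by
    intro p a b
    have h := hjac p a b
    have e1 : bracket a (bracket b p) = -(bracket a (bracket p b)) := by
      rw [hskew b p, map_neg]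
    have e2 : bracket b (bracket p a) = -(bracket (bracket p a) b) := hskew b _
    rw [e1, e2] at h
    refine eq_of_sub_eq_zero ?_
    rw [← h]; abel
  intro t₁ x y
  set gc : ℝ → L := fun s => bracket (F s x) (F s y) - F s (bracket x y) with hgc
  have hgderiv : ∀ t : ℝ, HasDerivAt gc (-(bracket (φ t) (gc t))) t := by
    intro t
    have hFx : HasDerivAt (fun s => F s x) (-(bracket (φ t) (F t x))) t := by
      simpa using (hF t).clm_apply (hasDerivAt_const t x)
    have hFy : HasDerivAt (fun s => F s y) (-(bracket (φ t) (F t y))) t := by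
      simpa using (hF t).clm_apply (hasDerivAt_const t y)
    have hFxy : HasDerivAt (fun s => F s (bracket x y))
        (-(bracket (φ t) (F t (bracket x y)))) t := by
      simpa using (hF t).clm_apply (hasDerivAt_const t (bracket x y))
    have hA : HasDerivAt (fun s => bracket (F s x))
        (bracket (-(bracket (φ t) (F t x)))) t :=
      bracket.hasFDerivAt.comp_hasDerivAt t hFx
    have hd := (hA.clm_apply hFy).sub hFxy
    convert hd using 1
    · rfl
    simp only [hgc, map_sub, map_neg, ContinuousLinearMap.neg_apply]
    rw [key (φ t) (F t x) (F t y)]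
    abel
  have hg0 : gc 0 = 0 := by simp [hgc, hF0]
  -- set up uniqueness on a compact interval
  set a : ℝ := -(|t₁| + 1) with ha
  set b : ℝ := |t₁| + 1 with hb
  have hbpos : (0:ℝ) < b := by rw [hb]; positivity
  have h0 : (0:ℝ) ∈ Set.Ioo a b := ⟨by rw [ha]; linarith, hbpos⟩
  have ht₁ : t₁ ∈ Set.Icc a b := by
    constructor
    · have := neg_abs_le t₁; simp only [ha]; linarith
    · have := le_abs_self t₁; simp only [hb]; linarith
  obtain ⟨C, hC⟩ := (isCompact_Icc (a := a) (b := b)).exists_bound_of_continuousOn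
    hφ.continuousOn
  have hC0 : 0 ≤ C := le_trans (norm_nonneg _) (hC 0 ⟨h0.1.le, h0.2.le⟩)
  set K : NNReal := Real.toNNReal (‖bracket‖ * C) with hK
  set v : ℝ → L → L := fun s z => if s ∈ Set.Icc a b then -(bracket (φ s) z) else 0
    with hv
  have hvlip : ∀ s, LipschitzOnWith K (v s) Set.univ := by
    intro s
    rw [lipschitzOnWith_univ]
    by_cases hs : s ∈ Set.Icc a b
    · simp only [hv, if_pos hs]
      have hl : LipschitzWith ‖-(bracket (φ s))‖₊ (fun z => -(bracket (φ s) z)) :=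
        (-(bracket (φ s))).lipschitz
      refine hl.weaken ?_
      rw [← NNReal.coe_le_coe, coe_nnnorm,
        Real.coe_toNNReal (‖bracket‖ * C) (mul_nonneg (norm_nonneg bracket) hC0), norm_neg]
      calc ‖bracket (φ s)‖ ≤ ‖bracket‖ * ‖φ s‖ := bracket.le_opNorm _
        _ ≤ ‖bracket‖ * C := by
            exact mul_le_mul_of_nonneg_left (hC s hs) (norm_nonneg bracket)
    · simp only [hv, if_neg hs]
      exact (LipschitzWith.const' (0:L))
  have hgcont : Continuous gc :=
    continuous_iff_continuousAt.mpr fun t => (hgderiv t).continuousAt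
  have huniq := ODE_solution_unique_of_mem_Icc (v := v) (s := fun _ => Set.univ)
    (fun t _ => hvlip t) h0 (hgcont.continuousOn)
    (fun u hu => by
      simp only [hv, Set.mem_Icc]
      rw [if_pos ⟨hu.1.le, hu.2.le⟩]
      exact hgderiv u)
    (fun _ _ => Set.mem_univ _)
    (continuous_const.continuousOn (f := fun _ : ℝ => (0:L)))
    (fun u hu => by
      have : v u (0:L) = 0 := by
        simp only [hv]; split <;> simp
      simpa [this] using hasDerivAt_const u (0:L))
    (fun _ _ => Set.mem_univ _)
    (by simpa using hg0)
  have := huniq ht₁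
  have hz : gc t₁ = 0 := this
  exact sub_eq_zero.mp hz
end

section
/- Let φ : ℝ → 𝔤 be continuous and let ξ be a solution of the Euler system associated to φ whose initial value ξ(0) lies in the center of 𝔤. Then ξ is constant: ξ(t) = ξ(0) for all t ∈ ℝ. -/
/-- Let `φ : ℝ → L` be continuous and let `ξ` be a solution of
the Euler system `ξ′(t) = −[φ(t), ξ(t)]` associated to `φ` on a
finite-dimensional real Lie algebra `L`, whose initial value `ξ(0)` lies in the
center of `L` (i.e. `[x, ξ(0)] = 0` for all `x`).  Then `ξ` is constant:
`ξ(t) = ξ(0)` for all `t ∈ ℝ`. -/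
theorem euler_solution_starting_in_center_is_constant
    {L : Type*} [NormedAddCommGroup L] [NormedSpace ℝ L] [FiniteDimensional ℝ L]
    (bracket : L →L[ℝ] L →L[ℝ] L)
    (halt : ∀ x : L, bracket x x = 0)
    (hjac : ∀ x y z : L,
      bracket x (bracket y z) + bracket y (bracket z x) + bracket z (bracket x y) = 0)
    (φ : ℝ → L) (hφ : Continuous φ)
    (ξ : ℝ → L)
    (hξ : ∀ t : ℝ, HasDerivAt ξ (-(bracket (φ t) (ξ t))) t)
    (hcenter : ∀ x : L, bracket x (ξ 0) = 0) :
    ∀ t : ℝ, ξ t = ξ 0 := by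
  intro t
  set a : ℝ := -(|t| + 1) with ha
  set b : ℝ := |t| + 1 with hb
  have habs : (0:ℝ) ≤ |t| := abs_nonneg t
  have hab : a < b := by simp [ha, hb]; linarith
  -- clamp function
  set c : ℝ → ℝ := fun s => min (max s a) b with hcdef
  have hc : Continuous c := (continuous_id.max continuous_const).min continuous_const
  have hcmem : ∀ s, c s ∈ Set.Icc a b := fun s =>
    ⟨le_min (le_max_right _ _) hab.le, min_le_right _ _⟩
  have hceq : ∀ s ∈ Set.Icc a b, c s = s := fun s hs => by
    simp [hcdef, max_eq_left hs.1, min_eq_left hs.2]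
  -- bound on the operator norm over the compact interval
  obtain ⟨C, hC⟩ := isCompact_Icc.exists_bound_of_continuousOn
    (f := fun s => bracket (φ s)) ((bracket.continuous.comp hφ).continuousOn)
  set K : NNReal := Real.toNNReal C with hK
  set v : ℝ → L → L := fun s x => -(bracket (φ (c s)) x) with hv
  have hlip : ∀ s : ℝ, LipschitzOnWith K (v s) Set.univ := by
    intro s
    apply LipschitzWith.lipschitzOnWith
    have h1 : LipschitzWith ‖-(bracket (φ (c s)))‖₊ (v s) := by
      have := (-(bracket (φ (c s)))).lipschitz
      exact this
    apply h1.weaken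
    have h2 : ‖-(bracket (φ (c s)))‖ ≤ C := by
      rw [norm_neg]; exact hC _ (hcmem s)
    have : ‖-(bracket (φ (c s)))‖ ≤ (K : ℝ) :=
      h2.trans (Real.le_coe_toNNReal C)
    exact_mod_cast this
  have ht0 : (0:ℝ) ∈ Set.Ioo a b := ⟨by simp [ha]; linarith, by simp [hb]; linarith⟩
  have h1 : -(|t| + 1) ≤ t := by nlinarith [neg_abs_le t]
  have h2 : t ≤ |t| + 1 := by nlinarith [le_abs_self t]
  have htmem : t ∈ Set.Icc a b := ⟨h1, h2⟩
  have key := ODE_solution_unique_of_mem_Icc (v := v) (s := fun _ => Set.univ)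
    (K := K) (t₀ := 0) (f := ξ) (g := fun _ => ξ 0) (fun s _ => hlip s) ht0
    (fun s _ => (hξ s).continuousAt.continuousWithinAt)
    (fun s hs => by
      have := hξ s
      simpa [hv, hceq s (Set.Ioo_subset_Icc_self hs)] using this)
    (fun _ _ => Set.mem_univ _)
    continuousOn_const
    (fun s _ => by
      have : v s (ξ 0) = 0 := by simp [hv, hcenter]
      rw [this]; exact hasDerivAt_const _ _)
    (fun _ _ => Set.mem_univ _)
    rfl
  exact key htmem
end

section
/- Let U ⊆ ℝ² be open, let H₁, …, H_n : ℝ² → ℝ be differentiable functions, and let λ_{ij}^k (i,j,k = 1,…,n) be real constants such that {H_i, H_j}(z) = Σ_{k=1}^n λ_{ij}^k H_k(z) for all z ∈ U and all i,j. Let b₁, …, b_n : ℝ → ℝ be functions, let z(t) = (q(t), p(t)) be a differentiable curve taking values in U that is a solution of the time-dependent Hamiltonian system q′(t) = Σ_{i=1}^n b_i(t)(∂H_i/∂p)(z(t)), p′(t) = −Σ_{i=1}^n b_i(t)(∂H_i/∂q)(z(t)), and let p₁, …, p_n : ℝ → ℝ be differentiable functions satisfying p_k′(t) = −Σ_{i=1}^n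 Σ_{j=1}^n λ_{ij}^k b_i(t) p_j(t) for all k and t. Then the function t ↦ Σ_{k=1}^n p_k(t) H_k(z(t)) is constant on ℝ. -/
/-- The Poisson bracket of two functions on `ℝ²` (coordinates `z = (q, p)`):
`{f, g}(z) = (∂f/∂p)(z)·(∂g/∂q)(z) − (∂f/∂q)(z)·(∂g/∂p)(z)`. -/
noncomputable def poissonBracket (f g : ℝ × ℝ → ℝ) (z : ℝ × ℝ) : ℝ :=
  fderiv ℝ f z (0, 1) * fderiv ℝ g z (1, 0) - fderiv ℝ f z (1, 0) * fderiv ℝ g z (0, 1)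

private lemma triple_swap {n : ℕ} (f : Fin n → Fin n → Fin n → ℝ) :
    ∑ k, ∑ i, ∑ j, f k i j = ∑ j, ∑ i, ∑ k, f k i j := by
  rw [show (∑ k, ∑ i, ∑ j, f k i j) = ∑ k, ∑ j, ∑ i, f k i j from
    Finset.sum_congr rfl fun k _ => Finset.sum_comm]
  rw [Finset.sum_comm]
  exact Finset.sum_congr rfl fun j _ => Finset.sum_comm

/-- Let `U ⊆ ℝ²` be open, `H₁, …, Hₙ : ℝ² → ℝ` differentiable
functions whose Poisson brackets close on `U` with structure constants
`lam i j k`.  Let `z(t)` be a differentiable curve in `U` solving the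
time-dependent Hamiltonian system `q′ = Σᵢ bᵢ(t) ∂Hᵢ/∂p`,
`p′ = −Σᵢ bᵢ(t) ∂Hᵢ/∂q`, and let `p₁, …, pₙ : ℝ → ℝ` satisfy
`pₖ′(t) = −Σᵢⱼ lam i j k · bᵢ(t) · pⱼ(t)`.  Then
`t ↦ Σₖ pₖ(t) Hₖ(z(t))` is constant on `ℝ`. -/
theorem first_integral_from_euler_system
    {n : ℕ} (U : Set (ℝ × ℝ)) (hU : IsOpen U)
    (H : Fin n → ℝ × ℝ → ℝ) (hH : ∀ i, Differentiable ℝ (H i))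
    (lam : Fin n → Fin n → Fin n → ℝ)
    (hlam : ∀ i j, ∀ z ∈ U,
      poissonBracket (H i) (H j) z = ∑ k, lam i j k * H k z)
    (b : Fin n → ℝ → ℝ)
    (z : ℝ → ℝ × ℝ) (hzU : ∀ t : ℝ, z t ∈ U)
    (hz : ∀ t : ℝ, HasDerivAt z
      (∑ i, b i t • (fderiv ℝ (H i) (z t) (0, 1), -(fderiv ℝ (H i) (z t) (1, 0)))) t)
    (P : Fin n → ℝ → ℝ)
    (hP : ∀ k, ∀ t : ℝ, HasDerivAt (P k) (-(∑ i, ∑ j, lam i j k * b i t * P j t)) t) :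
    ∀ t : ℝ, ∑ k, P k t * H k (z t) = ∑ k, P k 0 * H k (z 0) := by
  have hHz : ∀ (k : Fin n) (t : ℝ), HasDerivAt (fun t => H k (z t))
      (∑ i, b i t * ∑ j, lam i k j * H j (z t)) t := by
    intro k t
    have h1 := ((hH k) (z t)).hasFDerivAt.comp_hasDerivAt t (hz t)
    refine h1.congr_deriv (Eq.symm ?_)
    rw [map_sum]
    refine Finset.sum_congr rfl fun i _ => ?_
    rw [map_smul]
    have hv : ((fderiv ℝ (H i) (z t) (0,1), -(fderiv ℝ (H i) (z t) (1,0))) : ℝ × ℝ)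
        = fderiv ℝ (H i) (z t) (0,1) • ((1:ℝ),(0:ℝ))
          + (-(fderiv ℝ (H i) (z t) (1,0))) • ((0:ℝ),(1:ℝ)) := by
      simp
    rw [hv, map_add, map_smul, map_smul]
    have hb := hlam i k (z t) (hzU t)
    unfold poissonBracket at hb
    rw [smul_eq_mul, smul_eq_mul, smul_eq_mul]
    rw [← hb]
    ring
  have key : ∀ t : ℝ, HasDerivAt (fun t => ∑ k, P k t * H k (z t)) 0 t := by
    intro t
    have h2 : HasDerivAt (fun t => ∑ k, P k t * H k (z t))
        (∑ k, ((-(∑ i, ∑ j, lam i j k * b i t * P j t)) * H k (z t)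
          + P k t * (∑ i, b i t * ∑ j, lam i k j * H j (z t)))) t :=
      HasDerivAt.fun_sum fun k _ => (hP k t).mul (hHz k t)
    convert h2 using 1
    rw [Finset.sum_add_distrib]
    have e1 : ∑ k, P k t * (∑ i, b i t * ∑ j, lam i k j * H j (z t))
        = ∑ k, ∑ i, ∑ j, lam i k j * b i t * P k t * H j (z t) := by
      refine Finset.sum_congr rfl fun k _ => ?_
      rw [Finset.mul_sum]
      refine Finset.sum_congr rfl fun i _ => ?_
      rw [Finset.mul_sum, Finset.mul_sum]
      exact Finset.sum_congr rfl fun j _ => by ring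
    have e2 : ∑ k, (-(∑ i, ∑ j, lam i j k * b i t * P j t)) * H k (z t)
        = -∑ k, ∑ i, ∑ j, lam i j k * b i t * P j t * H k (z t) := by
      rw [← Finset.sum_neg_distrib]
      refine Finset.sum_congr rfl fun k _ => ?_
      rw [neg_mul, Finset.sum_mul]
      refine congrArg Neg.neg (Finset.sum_congr rfl fun i _ => ?_)
      rw [Finset.sum_mul]
    rw [e1, e2, triple_swap (fun k i j => lam i k j * b i t * P k t * H j (z t))]
    exact (neg_add_cancel _).symm
  intro t
  exact is_const_of_deriv_eq_zero (fun s => (key s).differentiableAt)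
    (fun s => (key s).deriv) t 0
end

section
/- Let U ⊆ ℝ² be open, let H₁, …, H_n : ℝ² → ℝ be differentiable functions, and let λ_{ij}^k (i,j,k = 1,…,n) be real constants such that {H_i, H_j}(z) = Σ_{k=1}^n λ_{ij}^k H_k(z) for all z ∈ U and all i,j. Let β₁, …, β_n be real numbers that are central for the structure constants, i.e. Σ_{j=1}^n λ_{ij}^k β_j = 0 for all i and k. Then for every choice of functions b₁, …, b_n : ℝ → ℝ and every differentiable curve z(t) = (q(t), p(t)) in U solving q′(t) = Σ_{i=1}^n b_i(t)(∂H_i/∂p)(z(t)), p′(t) = −Σ_{i=1}^n b_i(t)(∂H_i/∂q)(z(t)), the time-independent function t ↦ Σ_{k=1}^n β_k H_k(z(t)) is constant on ℝ. -/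
/-- Let `U ⊆ ℝ²` be open, `H₁, …, Hₙ : ℝ² → ℝ` differentiable
functions whose Poisson brackets close on `U` with structure constants
`lam i j k`, and let `β₁, …, βₙ` be real numbers central for the structure
constants, i.e. `Σⱼ lam i j k · βⱼ = 0` for all `i, k`.  Then for every choice
of coefficient functions `b₁, …, bₙ` and every differentiable curve `z(t)` in
`U` solving `q′ = Σᵢ bᵢ(t) ∂Hᵢ/∂p`, `p′ = −Σᵢ bᵢ(t) ∂Hᵢ/∂q`, the
time-independent function `t ↦ Σₖ βₖ Hₖ(z(t))` is constant on `ℝ`. -/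
theorem central_combination_is_first_integral
    {n : ℕ} (U : Set (ℝ × ℝ)) (hU : IsOpen U)
    (H : Fin n → ℝ × ℝ → ℝ) (hH : ∀ i, Differentiable ℝ (H i))
    (lam : Fin n → Fin n → Fin n → ℝ)
    (hlam : ∀ i j, ∀ z ∈ U,
      poissonBracket (H i) (H j) z = ∑ k, lam i j k * H k z)
    (β : Fin n → ℝ)
    (hβ : ∀ i k, ∑ j, lam i j k * β j = 0) :
    ∀ (b : Fin n → ℝ → ℝ) (z : ℝ → ℝ × ℝ), (∀ t : ℝ, z t ∈ U) →
      (∀ t : ℝ, HasDerivAt z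
        (∑ i, b i t • (fderiv ℝ (H i) (z t) (0, 1), -(fderiv ℝ (H i) (z t) (1, 0)))) t) →
      ∀ t : ℝ, ∑ k, β k * H k (z t) = ∑ k, β k * H k (z 0) := by
  intro b z hz hz' t
  have key : ∀ s : ℝ, HasDerivAt (fun t => ∑ k, β k * H k (z t)) 0 s := by
    intro s
    have hvec : ∀ k : Fin n, HasDerivAt (fun t => H k (z t))
        (fderiv ℝ (H k) (z s)
          (∑ i, b i s • ((fderiv ℝ (H i) (z s) (0, 1), -(fderiv ℝ (H i) (z s) (1, 0))) : ℝ × ℝ))) s :=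
      fun k => ((hH k).differentiableAt.hasFDerivAt).comp_hasDerivAt s (hz' s)
    have hsum : HasDerivAt (fun t => ∑ k, β k * H k (z t))
        (∑ k, β k * fderiv ℝ (H k) (z s)
          (∑ i, b i s • ((fderiv ℝ (H i) (z s) (0, 1), -(fderiv ℝ (H i) (z s) (1, 0))) : ℝ × ℝ))) s :=
      HasDerivAt.fun_sum fun k _ => (hvec k).const_mul (β k)
    have hzero : (∑ k, β k * fderiv ℝ (H k) (z s)
        (∑ i, b i s • ((fderiv ℝ (H i) (z s) (0, 1), -(fderiv ℝ (H i) (z s) (1, 0))) : ℝ × ℝ))) = 0 := by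
      have hdecomp : ∀ k : Fin n, fderiv ℝ (H k) (z s)
          (∑ i, b i s • ((fderiv ℝ (H i) (z s) (0, 1), -(fderiv ℝ (H i) (z s) (1, 0))) : ℝ × ℝ))
          = ∑ i, b i s * poissonBracket (H i) (H k) (z s) := by
        intro k
        rw [map_sum]
        refine Finset.sum_congr rfl fun i _ => ?_
        rw [map_smul]
        have hv : ((fderiv ℝ (H i) (z s) (0, 1), -(fderiv ℝ (H i) (z s) (1, 0))) : ℝ × ℝ)
            = fderiv ℝ (H i) (z s) (0, 1) • ((1,0) : ℝ × ℝ)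
              + (-(fderiv ℝ (H i) (z s) (1, 0))) • ((0,1) : ℝ × ℝ) := by
          simp [Prod.ext_iff]
        rw [hv, map_add, map_smul, map_smul]
        simp only [smul_eq_mul, poissonBracket]
        ring
      calc (∑ k, β k * fderiv ℝ (H k) (z s)
            (∑ i, b i s • ((fderiv ℝ (H i) (z s) (0, 1), -(fderiv ℝ (H i) (z s) (1, 0))) : ℝ × ℝ)))
          = ∑ k, β k * ∑ i, b i s * (∑ m, lam i k m * H m (z s)) := by
            refine Finset.sum_congr rfl fun k _ => ?_
            rw [hdecomp k]
            congr 1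
            exact Finset.sum_congr rfl fun i _ => by rw [hlam i k (z s) (hz s)]
        _ = ∑ i, b i s * ∑ m, H m (z s) * (∑ k, lam i k m * β k) := by
            simp only [Finset.mul_sum]
            rw [Finset.sum_comm]
            refine Finset.sum_congr rfl fun i _ => ?_
            rw [Finset.sum_comm]
            refine Finset.sum_congr rfl fun m _ => ?_
            refine Finset.sum_congr rfl fun k _ => ?_
            ring
        _ = 0 := by
            refine Finset.sum_eq_zero fun i _ => ?_
            have h0 : ∀ m : Fin n, H m (z s) * (∑ k, lam i k m * β k) = 0 :=
              fun m => by rw [hβ i m, mul_zero]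
            rw [Finset.sum_congr rfl fun m _ => h0 m, Finset.sum_const_zero, mul_zero]
    rw [← hzero]
    exact hsum
  have hdiff : Differentiable ℝ (fun t => ∑ k, β k * H k (z t)) :=
    fun s => (key s).differentiableAt
  have : ∀ s, deriv (fun t => ∑ k, β k * H k (z t)) s = 0 := fun s => (key s).deriv
  exact is_const_of_deriv_eq_zero hdiff this t 0
end

section
/- Let c ∈ ℝ and define on the open set U = {(q,p) ∈ ℝ² : q > 0} the functions H₁(q,p) = (1/2)pq, H₂(q,p) = −(1/4)p² + (1/4)(q² − c/q²), and H₃(q,p) = −(1/4)p² − (1/4)(q² + c/q²). Then these functions satisfy on U the sp(1,ℝ) commutation relations for the Poisson bracket: {H₁, H₂} = −H₃, {H₂, H₃} = H₁, and {H₃, H₁} = H₂. -/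
/-- `H₁(q, p) = (1/2) p q`. -/
noncomputable def H₁ (z : ℝ × ℝ) : ℝ := (1 / 2) * z.2 * z.1

/-- `H₂(q, p) = −(1/4) p² + (1/4)(q² − c/q²)`. -/
noncomputable def H₂ (c : ℝ) (z : ℝ × ℝ) : ℝ :=
  -(1 / 4) * z.2 ^ 2 + (1 / 4) * (z.1 ^ 2 - c / z.1 ^ 2)

/-- `H₃(q, p) = −(1/4) p² − (1/4)(q² + c/q²)`. -/
noncomputable def H₃ (c : ℝ) (z : ℝ × ℝ) : ℝ :=
  -(1 / 4) * z.2 ^ 2 - (1 / 4) * (z.1 ^ 2 + c / z.1 ^ 2)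

open ContinuousLinearMap in
/-- Auxiliary: the linear map `(v₁, v₂) ↦ a v₁ + b v₂`. -/
noncomputable def dmap (a b : ℝ) : (ℝ × ℝ) →L[ℝ] ℝ :=
  a • fst ℝ ℝ ℝ + b • snd ℝ ℝ ℝ

@[simp] lemma dmap_apply (a b : ℝ) (v : ℝ × ℝ) : dmap a b v = a * v.1 + b * v.2 := by
  simp [dmap, smul_eq_mul]

lemma hfst (z : ℝ × ℝ) : HasFDerivAt (fun z : ℝ × ℝ => z.1) (ContinuousLinearMap.fst ℝ ℝ ℝ) z :=
  hasFDerivAt_fst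

lemma hsnd (z : ℝ × ℝ) : HasFDerivAt (fun z : ℝ × ℝ => z.2) (ContinuousLinearMap.snd ℝ ℝ ℝ) z :=
  hasFDerivAt_snd

lemma hH₁ (z : ℝ × ℝ) : HasFDerivAt H₁ (dmap ((1/2) * z.2) ((1/2) * z.1)) z := by
  have h := ((hsnd z).const_mul (1/2 : ℝ)).mul (hfst z)
  refine h.congr_fderiv ?_
  ext v <;> simp [dmap, smul_eq_mul] <;> ring

lemma hsq (z : ℝ × ℝ) : HasFDerivAt (fun z : ℝ × ℝ => z.1 ^ 2) (dmap (2 * z.1) 0) z := by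
  have h := (hfst z).mul (hfst z)
  have he : ((fun z : ℝ × ℝ => z.1) * fun z : ℝ × ℝ => z.1) = fun z : ℝ × ℝ => z.1 ^ 2 := by
    funext w; simp only [Pi.mul_apply]; ring
  rw [he] at h
  refine h.congr_fderiv ?_
  ext v <;> simp [dmap, smul_eq_mul] <;> ring

lemma hinv (z : ℝ × ℝ) (hz : z.1 ≠ 0) :
    HasFDerivAt (fun z : ℝ × ℝ => (z.1 ^ 2)⁻¹) (dmap (-2 / z.1 ^ 3) 0) z := by
  have h := (hasDerivAt_inv (pow_ne_zero 2 hz)).comp_hasFDerivAt z (hsq z)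
  refine h.congr_fderiv ?_
  ext v <;> simp [dmap, smul_eq_mul] <;> field_simp <;> ring

lemma hpsq (z : ℝ × ℝ) : HasFDerivAt (fun z : ℝ × ℝ => z.2 ^ 2) (dmap 0 (2 * z.2)) z := by
  have h := (hsnd z).mul (hsnd z)
  have he : ((fun z : ℝ × ℝ => z.2) * fun z : ℝ × ℝ => z.2) = fun z : ℝ × ℝ => z.2 ^ 2 := by
    funext w; simp only [Pi.mul_apply]; ring
  rw [he] at h
  refine h.congr_fderiv ?_
  ext v <;> simp [dmap, smul_eq_mul] <;> ring

lemma hH₂ (c : ℝ) (z : ℝ × ℝ) (hz : z.1 ≠ 0) :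
    HasFDerivAt (H₂ c) (dmap (z.1 / 2 + c / (2 * z.1 ^ 3)) (-(1/2) * z.2)) z := by
  have h : HasFDerivAt (fun z : ℝ × ℝ =>
      -(1 / 4) * z.2 ^ 2 + (1 / 4) * (z.1 ^ 2 - c * (z.1 ^ 2)⁻¹)) _ z :=
    ((hpsq z).const_mul (-(1/4) : ℝ)).add
      (((hsq z).sub ((hinv z hz).const_mul c)).const_mul ((1/4) : ℝ))
  have he : (fun z : ℝ × ℝ =>
      -(1 / 4) * z.2 ^ 2 + (1 / 4) * (z.1 ^ 2 - c * (z.1 ^ 2)⁻¹)) = H₂ c := by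
    funext w; simp [H₂, div_eq_mul_inv]
  rw [he] at h
  refine h.congr_fderiv ?_
  ext v <;> simp [dmap, smul_eq_mul] <;> field_simp <;> ring

lemma hH₃ (c : ℝ) (z : ℝ × ℝ) (hz : z.1 ≠ 0) :
    HasFDerivAt (H₃ c) (dmap (-(z.1 / 2) + c / (2 * z.1 ^ 3)) (-(1/2) * z.2)) z := by
  have h : HasFDerivAt (fun z : ℝ × ℝ =>
      -(1 / 4) * z.2 ^ 2 - (1 / 4) * (z.1 ^ 2 + c * (z.1 ^ 2)⁻¹)) _ z :=
    ((hpsq z).const_mul (-(1/4) : ℝ)).sub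
      (((hsq z).add ((hinv z hz).const_mul c)).const_mul ((1/4) : ℝ))
  have he : (fun z : ℝ × ℝ =>
      -(1 / 4) * z.2 ^ 2 - (1 / 4) * (z.1 ^ 2 + c * (z.1 ^ 2)⁻¹)) = H₃ c := by
    funext w; simp [H₃, div_eq_mul_inv]
  rw [he] at h
  refine h.congr_fderiv ?_
  ext v <;> simp [dmap, smul_eq_mul] <;> field_simp <;> ring

/-- On the open set `U = {(q, p) : q > 0}`, the Hamiltonian
functions `H₁, H₂, H₃` of the Milne–Pinney system satisfy the `sp(1, ℝ)`
commutation relations for the Poisson bracket: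
`{H₁, H₂} = −H₃`, `{H₂, H₃} = H₁`, `{H₃, H₁} = H₂`. -/
theorem milne_pinney_sp1_commutation_relations (c : ℝ) :
    ∀ q p : ℝ, 0 < q →
      poissonBracket H₁ (H₂ c) (q, p) = -(H₃ c (q, p)) ∧
      poissonBracket (H₂ c) (H₃ c) (q, p) = H₁ (q, p) ∧
      poissonBracket (H₃ c) H₁ (q, p) = H₂ c (q, p) := by
  intro q p hq
  have hq0 : (q : ℝ) ≠ 0 := ne_of_gt hq
  have h1 := (hH₁ (q, p)).fderiv
  have h2 := (hH₂ c (q, p) hq0).fderiv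
  have h3 := (hH₃ c (q, p) hq0).fderiv
  refine ⟨?_, ?_, ?_⟩ <;>
    simp only [poissonBracket, h1, h2, h3, dmap_apply, H₁, H₂, H₃] <;>
    field_simp <;> ring
end

section
/- Let c > 0, let ω : ℝ → ℝ be a function, and set α(t) = 1 − ω(t)² and β(t) = 1 + ω(t)². Let q, p : ℝ → ℝ be differentiable with q(t) > 0 for all t, solving the Milne–Pinney system q′(t) = p(t), p′(t) = −ω(t)² q(t) + c/q(t)³, and let ξ = (ξ₁, ξ₂, ξ₃) : ℝ → ℝ³ be differentiable with ξ₁′(t) = −β(t)ξ₂(t) + α(t)ξ₃(t), ξ₂′(t) = β(t)ξ₁(t), ξ₃′(t) = α(t)ξ₁(t). Define I(t, q, p) = 2pq·ξ₁(t) + (q² − p² − c/q²)·ξ₂(t) − (q² + p² + c/q²)·ξ₃(t). Then the function t ↦ I(t, q(t), p(t)) is constant on ℝ; moreover, if ξ is 2π-periodic then for each fixed (q,p) with q > 0 the function t ↦ I(t, q, p) is 2π-periodic. -/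
/-- Let `c > 0`, `ω : ℝ → ℝ`, and set `α(t) = 1 − ω(t)²`,
`β(t) = 1 + ω(t)²`.  Let `(q, p)` solve the Milne–Pinney system
`q′ = p`, `p′ = −ω² q + c/q³` with `q > 0`, and let `ξ = (ξ₁, ξ₂, ξ₃)` solve the
Euler system `ξ₁′ = −β ξ₂ + α ξ₃`, `ξ₂′ = β ξ₁`, `ξ₃′ = α ξ₁` on `sp(1, ℝ)`.
Define `I(t, q, p) = 2pq·ξ₁(t) + (q² − p² − c/q²)·ξ₂(t) − (q² + p² + c/q²)·ξ₃(t)`.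
Then `t ↦ I(t, q(t), p(t))` is constant on `ℝ`; moreover, if `ξ` is
`2π`-periodic then for each fixed `(q, p)` with `q > 0` the function
`t ↦ I(t, q, p)` is `2π`-periodic. -/
theorem milne_pinney_first_integral
    (c : ℝ) (hc : 0 < c) (ω : ℝ → ℝ)
    (q p : ℝ → ℝ) (hq0 : ∀ t : ℝ, 0 < q t)
    (hq : ∀ t : ℝ, HasDerivAt q (p t) t)
    (hp : ∀ t : ℝ, HasDerivAt p (-(ω t) ^ 2 * q t + c / q t ^ 3) t)
    (ξ₁ ξ₂ ξ₃ : ℝ → ℝ)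
    (h₁ : ∀ t : ℝ, HasDerivAt ξ₁
      (-(1 + (ω t) ^ 2) * ξ₂ t + (1 - (ω t) ^ 2) * ξ₃ t) t)
    (h₂ : ∀ t : ℝ, HasDerivAt ξ₂ ((1 + (ω t) ^ 2) * ξ₁ t) t)
    (h₃ : ∀ t : ℝ, HasDerivAt ξ₃ ((1 - (ω t) ^ 2) * ξ₁ t) t)
    (I : ℝ → ℝ → ℝ → ℝ)
    (hI : ∀ t a b : ℝ, I t a b =
      2 * b * a * ξ₁ t + (a ^ 2 - b ^ 2 - c / a ^ 2) * ξ₂ t -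
        (a ^ 2 + b ^ 2 + c / a ^ 2) * ξ₃ t) :
    (∀ t : ℝ, I t (q t) (p t) = I 0 (q 0) (p 0)) ∧
      ((∀ t : ℝ, ξ₁ (t + 2 * Real.pi) = ξ₁ t ∧ ξ₂ (t + 2 * Real.pi) = ξ₂ t ∧
          ξ₃ (t + 2 * Real.pi) = ξ₃ t) →
        ∀ a b : ℝ, 0 < a → ∀ t : ℝ, I (t + 2 * Real.pi) a b = I t a b) := by
  constructor
  · set F : ℝ → ℝ := fun t => 2 * p t * q t * ξ₁ t +
        (q t ^ 2 - p t ^ 2 - c / q t ^ 2) * ξ₂ t -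
        (q t ^ 2 + p t ^ 2 + c / q t ^ 2) * ξ₃ t with hF
    have key : ∀ t : ℝ, HasDerivAt F 0 t := by
      intro t
      have hqne : q t ≠ 0 := (hq0 t).ne'
      have hq2 : HasDerivAt (fun t => q t ^ 2) (2 * q t ^ 1 * p t) t := by
        simpa using (hq t).fun_pow 2
      have hp2 : HasDerivAt (fun t => p t ^ 2)
          (2 * p t ^ 1 * (-(ω t) ^ 2 * q t + c / q t ^ 3)) t := by
        simpa using (hp t).fun_pow 2
      have hq2ne : q t ^ 2 ≠ 0 := pow_ne_zero 2 hqne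
      have hcd := (hasDerivAt_const t c).div hq2 hq2ne
      have big := (((((hp t).const_mul 2).mul (hq t)).mul (h₁ t)).add
          (((hq2.sub hp2).sub hcd).mul (h₂ t))).sub
          (((hq2.add hp2).add hcd).mul (h₃ t))
      refine big.congr_deriv ?_
      simp only [Pi.mul_apply, Pi.sub_apply, Pi.add_apply, Pi.div_apply]
      field_simp
      ring
    have hconst : ∀ t : ℝ, F t = F 0 := fun t =>
      is_const_of_deriv_eq_zero (fun x => (key x).differentiableAt)
        (fun x => (key x).deriv) t 0
    intro t
    rw [hI, hI]
    exact hconst t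
  · intro hper a b _ t
    obtain ⟨e1, e2, e3⟩ := hper t
    rw [hI, hI, e1, e2, e3]
end
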